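/- arXiv:2503.01403 — 2 statements merged into one kernel-verified Lean document; each statement's English description precedes it below -/
import Mathlib

section
/- For x > π/2, the first component of the solution satisfies the integral equation ψ_1(x,μ) = σ^+ cos(μx − θ) + σ^− cos(μ(π−x) − θ) − ∫_0^{π/2} (σ^+ sin(μ(t−x)) + σ^− sin(μ(x+t−π))) ψ_1(t,μ) p(t) dt + ∫_0^{π/2} (σ^+ cos(μ(t−x)) + σ^− cos(μ(x+t−π))) ψ_2(t,μ) q(t) dt − ∫_{π/2}^x sin(μ(t−x)) ψ_1(t,μ) p(t) dt + ∫_{π/2}^x cos(μ(t−x)) ψ_2(t,μ) q(t) dt. -/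
open Real MeasureTheory Set Filter Topology

noncomputable section

/-- `V` is a real-valued function in the Sobolev space `W^{1,2}(0,π)`:
`V ∈ L²(0,π)` and `V` has a weak derivative `V' ∈ L²(0,π)`. -/
def SobolevW12 (V : ℝ → ℝ) : Prop :=
  MemLp V 2 (volume.restrict (Set.Ioo 0 π)) ∧
  ∃ V' : ℝ → ℝ, MemLp V' 2 (volume.restrict (Set.Ioo 0 π)) ∧
    ∀ x ∈ Set.Icc 0 π, V x = V 0 + ∫ t in (0:ℝ)..x, V' t

/-- `σ⁺ = (σ + σ⁻¹)/2`. -/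
def sigmaP (σ : ℝ) : ℝ := (σ + σ⁻¹) / 2

/-- `σ⁻ = (σ - σ⁻¹)/2`. -/
def sigmaM (σ : ℝ) : ℝ := (σ - σ⁻¹) / 2

/-- `ρ(x) = (1/2)∫₀ˣ (p+q) = ∫₀ˣ V(t) dt`. -/
def rho (V : ℝ → ℝ) (x : ℝ) : ℝ := ∫ t in (0:ℝ)..x, V t

/-- `ψ = (ψ1, ψ2)` is the solution of the Dirac system `B Y' + Ω Y = μ Y` on
`(0,π/2) ∪ (π/2,π)`, with `p = V + m`, `q = V - m`, initial condition
`ψ(0,μ) = (cos θ, -sin θ)ᵀ`, continuity up to `π/2` from the left and up to `π`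
from the right, and the jump conditions
`ψ1(π/2+0) = σ ψ1(π/2-0)`, `ψ2(π/2+0) = σ⁻¹ ψ2(π/2-0)`.
(The value at `x ≤ π/2` is the left branch, so `ψᵢ (π/2) μ = ψᵢ(π/2-0, μ)`.) -/
structure IsDiracSolution (V : ℝ → ℝ) (m θ σ : ℝ) (ψ1 ψ2 : ℝ → ℂ → ℂ) : Prop where
  init1 : ∀ μ : ℂ, ψ1 0 μ = Real.cos θ
  init2 : ∀ μ : ℂ, ψ2 0 μ = -Real.sin θ
  contLeft1 : ∀ μ : ℂ, ContinuousOn (fun x => ψ1 x μ) (Set.Icc 0 (π/2))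
  contLeft2 : ∀ μ : ℂ, ContinuousOn (fun x => ψ2 x μ) (Set.Icc 0 (π/2))
  contRight1 : ∀ μ : ℂ, ContinuousOn (fun x => ψ1 x μ) (Set.Ioc (π/2) π)
  contRight2 : ∀ μ : ℂ, ContinuousOn (fun x => ψ2 x μ) (Set.Ioc (π/2) π)
  hasDeriv1 : ∀ μ : ℂ, ∀ x ∈ Set.Ioo 0 (π/2) ∪ Set.Ioo (π/2) π,
      HasDerivAt (fun t => ψ1 t μ) ((((V x - m : ℝ) : ℂ) - μ) * ψ2 x μ) x
  hasDeriv2 : ∀ μ : ℂ, ∀ x ∈ Set.Ioo 0 (π/2) ∪ Set.Ioo (π/2) π,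
      HasDerivAt (fun t => ψ2 t μ) ((μ - ((V x + m : ℝ) : ℂ)) * ψ1 x μ) x
  jump1 : ∀ μ : ℂ, Tendsto (fun x => ψ1 x μ) (𝓝[>] (π/2)) (𝓝 ((σ : ℂ) * ψ1 (π/2) μ))
  jump2 : ∀ μ : ℂ, Tendsto (fun x => ψ2 x μ) (𝓝[>] (π/2)) (𝓝 ((σ : ℂ)⁻¹ * ψ2 (π/2) μ))

lemma V_contOn {V : ℝ → ℝ} (hV : SobolevW12 V) : ContinuousOn V (Icc 0 π) := by
  obtain ⟨-, V', hV'mem, hform⟩ := hV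
  have hfin : IsFiniteMeasure (volume.restrict (Set.Ioo 0 π)) := by
    constructor
    rw [Measure.restrict_apply_univ]
    simp [Real.volume_Ioo]
  have hint : IntegrableOn V' (Ioo 0 π) := hV'mem.integrable (by norm_num)
  have hintIcc : IntegrableOn V' (Icc 0 π) :=
    hint.congr_set_ae (Ioo_ae_eq_Icc (α := ℝ) (a := 0) (b := π)).symm
  have hcont : ContinuousOn (fun x => ∫ t in (0:ℝ)..x, V' t) (Icc 0 π) := by
    have := intervalIntegral.continuousOn_primitive_interval (a := 0) (b := π) (f := V')
      (μ := volume) (by rwa [uIcc_of_le pi_pos.le])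
    rwa [uIcc_of_le pi_pos.le] at this
  exact (continuousOn_const.add hcont).congr hform

def tilde (a : ℝ) (L : ℂ) (f : ℝ → ℂ) : ℝ → ℂ := fun t => if t = a then L else f t

lemma tilde_of_gt {a : ℝ} {L : ℂ} {f : ℝ → ℂ} {t : ℝ} (h : a < t) : tilde a L f t = f t :=
  if_neg (ne_of_gt h)

lemma tilde_self {a : ℝ} {L : ℂ} {f : ℝ → ℂ} : tilde a L f a = L := if_pos rfl

lemma tilde_contOn {a b : ℝ} {L : ℂ} {f : ℝ → ℂ} (_hab : a < b)
    (hc : ContinuousOn f (Ioc a b)) (hjump : Tendsto f (𝓝[>] a) (𝓝 L)) :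
    ContinuousOn (tilde a L f) (Icc a b) := by
  intro t ht
  rcases eq_or_lt_of_le ht.1 with rfl | hlt
  · have h1 : Tendsto (tilde a L f) (𝓝[>] a) (𝓝 L) := by
      apply hjump.congr'
      filter_upwards [self_mem_nhdsWithin] with s hs
      exact (tilde_of_gt hs).symm
    have h2 : Tendsto (tilde a L f) (𝓝[≥] a) (𝓝 L) := by
      rw [show Ici a = insert a (Ioi a) by simp, nhdsWithin_insert]
      refine Tendsto.sup ?_ h1
      simpa [tilde_self] using tendsto_pure_nhds (tilde a L f) a
    have : Tendsto (tilde a L f) (𝓝[Icc a b] a) (𝓝 L) :=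
      h2.mono_left (nhdsWithin_mono _ Icc_subset_Ici_self)
    simpa [ContinuousWithinAt, tilde_self] using this
  · have hmem : Ioc a b ∈ 𝓝[Icc a b] t := by
      apply mem_nhdsWithin.mpr
      exact ⟨Ioi a, isOpen_Ioi, hlt, fun y hy => ⟨hy.1, hy.2.2⟩⟩
    have hf : ContinuousWithinAt f (Icc a b) t := (hc t ⟨hlt, ht.2⟩).mono_of_mem_nhdsWithin hmem
    apply hf.congr_of_eventuallyEq
    · filter_upwards [hmem] with s hs using tilde_of_gt hs.1
    · exact tilde_of_gt hlt

lemma ii_aux {g f : ℝ → ℂ} {W : ℝ → ℝ} {l r : ℝ} (hlr : l ≤ r)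
    (hg : Continuous g) (hf : ContinuousOn f (Icc l r)) (hW : ContinuousOn W (Icc l r)) :
    IntervalIntegrable (fun t => g t * f t * ((W t : ℝ) : ℂ)) volume l r := by
  apply ContinuousOn.intervalIntegrable
  rw [uIcc_of_le hlr]
  exact (hg.continuousOn.mul hf).mul (Complex.continuous_ofReal.comp_continuousOn hW)

lemma phase_cos_deriv (μ c : ℂ) (t : ℝ) :
    HasDerivAt (fun s : ℝ => Complex.cos (μ * ((s : ℂ) + c)))
      (-Complex.sin (μ * ((t : ℂ) + c)) * μ) t := by
  have h : HasDerivAt (fun w : ℂ => Complex.cos (μ * (w + c)))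
      (-Complex.sin (μ * ((t : ℂ) + c)) * μ) (t : ℝ) := by
    have h1 : HasDerivAt (fun w : ℂ => μ * (w + c)) μ (t : ℝ) := by
      simpa using (((hasDerivAt_id ((t : ℝ) : ℂ)).add_const c).const_mul μ)
    simpa using h1.ccos
  exact h.comp_ofReal

lemma phase_sin_deriv (μ c : ℂ) (t : ℝ) :
    HasDerivAt (fun s : ℝ => Complex.sin (μ * ((s : ℂ) + c)))
      (Complex.cos (μ * ((t : ℂ) + c)) * μ) t := by
  have h : HasDerivAt (fun w : ℂ => Complex.sin (μ * (w + c)))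
      (Complex.cos (μ * ((t : ℂ) + c)) * μ) (t : ℝ) := by
    have h1 : HasDerivAt (fun w : ℂ => μ * (w + c)) μ (t : ℝ) := by
      simpa using (((hasDerivAt_id ((t : ℝ) : ℂ)).add_const c).const_mul μ)
    simpa using h1.csin
  exact h.comp_ofReal

lemma ftc_aux (V : ℝ → ℝ) (m : ℝ) (μ c : ℂ) (f1 f2 : ℝ → ℂ) (l r : ℝ) (hlr : l ≤ r)
    (hc1 : ContinuousOn f1 (Icc l r)) (hc2 : ContinuousOn f2 (Icc l r))
    (hVc : ContinuousOn V (Icc l r))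
    (hd1 : ∀ t ∈ Ioo l r, HasDerivAt f1 ((((V t - m : ℝ) : ℂ) - μ) * f2 t) t)
    (hd2 : ∀ t ∈ Ioo l r, HasDerivAt f2 ((μ - ((V t + m : ℝ) : ℂ)) * f1 t) t) :
    (∫ t in l..r, (-Complex.sin (μ * ((t : ℂ) + c)) * f1 t * ((V t + m : ℝ) : ℂ)
        + Complex.cos (μ * ((t : ℂ) + c)) * f2 t * ((V t - m : ℝ) : ℂ)))
    = (Complex.cos (μ * ((r : ℂ) + c)) * f1 r + Complex.sin (μ * ((r : ℂ) + c)) * f2 r)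
      - (Complex.cos (μ * ((l : ℂ) + c)) * f1 l + Complex.sin (μ * ((l : ℂ) + c)) * f2 l) := by
  apply intervalIntegral.integral_eq_sub_of_hasDerivAt_of_le hlr
  · exact (((Complex.continuous_cos.comp (by continuity)).continuousOn).mul hc1).add
      (((Complex.continuous_sin.comp (by continuity)).continuousOn).mul hc2)
  · intro t ht
    have h1 := (phase_cos_deriv μ c t).mul (hd1 t ht)
    have h2 := (phase_sin_deriv μ c t).mul (hd2 t ht)
    have := h1.add h2
    convert this using 1
    · rfl
    · push_cast
      ring
  · apply ContinuousOn.intervalIntegrable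
    rw [uIcc_of_le hlr]
    apply ContinuousOn.add
    · exact ((Complex.continuous_sin.comp (by continuity)).neg.continuousOn.mul hc1).mul
        (Complex.continuous_ofReal.comp_continuousOn (hVc.add continuousOn_const))
    · exact ((Complex.continuous_cos.comp (by continuity)).continuousOn.mul hc2).mul
        (Complex.continuous_ofReal.comp_continuousOn (hVc.sub continuousOn_const))


/-- for `x > π/2`, the first component satisfies the integral equation
`ψ1(x,μ) = σ⁺ cos(μx-θ) + σ⁻ cos(μ(π-x)-θ)
  - ∫₀^{π/2} (σ⁺ sin(μ(t-x)) + σ⁻ sin(μ(x+t-π))) ψ1(t,μ) p(t) dt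
  + ∫₀^{π/2} (σ⁺ cos(μ(t-x)) + σ⁻ cos(μ(x+t-π))) ψ2(t,μ) q(t) dt
  - ∫_{π/2}^x sin(μ(t-x)) ψ1(t,μ) p(t) dt + ∫_{π/2}^x cos(μ(t-x)) ψ2(t,μ) q(t) dt`. -/
theorem dirac_integral_equation_psi1_right
    (V : ℝ → ℝ) (m θ β σ : ℝ)
    (hθ : θ ∈ Set.Ico 0 π) (hβ : β ∈ Set.Ico 0 π) (hσ : 0 < σ)
    (hV : SobolevW12 V) (hV0 : (∫ t in (0:ℝ)..π, V t) = 0)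
    (ψ1 ψ2 : ℝ → ℂ → ℂ) (hψ : IsDiracSolution V m θ σ ψ1 ψ2)
    (μ : ℂ) (x : ℝ) (hx : x ∈ Set.Ioo (π/2) π) :
    ψ1 x μ = (sigmaP σ : ℂ) * Complex.cos (μ * (x : ℂ) - (θ : ℂ))
      + (sigmaM σ : ℂ) * Complex.cos (μ * ((π : ℝ) - x : ℝ) - (θ : ℂ))
      - (∫ t in (0:ℝ)..(π/2),
          ((sigmaP σ : ℂ) * Complex.sin (μ * ((t : ℂ) - (x : ℂ)))
            + (sigmaM σ : ℂ) * Complex.sin (μ * ((x : ℂ) + (t : ℂ) - (π : ℂ))))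
          * ψ1 t μ * ((V t + m : ℝ) : ℂ))
      + (∫ t in (0:ℝ)..(π/2),
          ((sigmaP σ : ℂ) * Complex.cos (μ * ((t : ℂ) - (x : ℂ)))
            + (sigmaM σ : ℂ) * Complex.cos (μ * ((x : ℂ) + (t : ℂ) - (π : ℂ))))
          * ψ2 t μ * ((V t - m : ℝ) : ℂ))
      - (∫ t in (π/2)..x, Complex.sin (μ * ((t : ℂ) - (x : ℂ))) * ψ1 t μ * ((V t + m : ℝ) : ℂ))
      + (∫ t in (π/2)..x, Complex.cos (μ * ((t : ℂ) - (x : ℂ))) * ψ2 t μ * ((V t - m : ℝ) : ℂ)) := by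
  obtain ⟨hx1, hx2⟩ := hx
  have hπ : (0:ℝ) < π := Real.pi_pos
  have hVc : ContinuousOn V (Icc 0 π) := V_contOn hV
  have hVcL : ContinuousOn V (Icc 0 (π/2)) := hVc.mono (Icc_subset_Icc le_rfl (by linarith))
  have hVcR : ContinuousOn V (Icc (π/2) x) := hVc.mono (Icc_subset_Icc (by linarith) hx2.le)
  have hpL : ContinuousOn (fun t => V t + m) (Icc 0 (π/2)) := hVcL.add continuousOn_const
  have hqL : ContinuousOn (fun t => V t - m) (Icc 0 (π/2)) := hVcL.sub continuousOn_const
  have hpR : ContinuousOn (fun t => V t + m) (Icc (π/2) x) := hVcR.add continuousOn_const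
  have hqR : ContinuousOn (fun t => V t - m) (Icc (π/2) x) := hVcR.sub continuousOn_const
  -- the tilde (extended) solution on [π/2, x]
  have hg1c : ContinuousOn (tilde (π/2) ((σ:ℂ) * ψ1 (π/2) μ) (fun s => ψ1 s μ)) (Icc (π/2) x) :=
    tilde_contOn hx1 ((hψ.contRight1 μ).mono (Ioc_subset_Ioc le_rfl hx2.le)) (hψ.jump1 μ)
  have hg2c : ContinuousOn (tilde (π/2) ((σ:ℂ)⁻¹ * ψ2 (π/2) μ) (fun s => ψ2 s μ)) (Icc (π/2) x) :=
    tilde_contOn hx1 ((hψ.contRight2 μ).mono (Ioc_subset_Ioc le_rfl hx2.le)) (hψ.jump2 μ)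
  have hgd1 : ∀ t ∈ Ioo (π/2) x,
      HasDerivAt (tilde (π/2) ((σ:ℂ) * ψ1 (π/2) μ) (fun s => ψ1 s μ))
        ((((V t - m : ℝ) : ℂ) - μ) * (tilde (π/2) ((σ:ℂ)⁻¹ * ψ2 (π/2) μ) (fun s => ψ2 s μ) t)) t := by
    intro t ht
    have hmem : t ∈ Ioo 0 (π/2) ∪ Ioo (π/2) π := Or.inr ⟨ht.1, ht.2.trans hx2⟩
    have heq : (tilde (π/2) ((σ:ℂ) * ψ1 (π/2) μ) (fun s => ψ1 s μ)) =ᶠ[𝓝 t] fun s => ψ1 s μ := by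
      filter_upwards [isOpen_Ioi.mem_nhds ht.1] with s hs using tilde_of_gt hs
    rw [tilde_of_gt ht.1]
    exact (hψ.hasDeriv1 μ t hmem).congr_of_eventuallyEq heq
  have hgd2 : ∀ t ∈ Ioo (π/2) x,
      HasDerivAt (tilde (π/2) ((σ:ℂ)⁻¹ * ψ2 (π/2) μ) (fun s => ψ2 s μ))
        ((μ - ((V t + m : ℝ) : ℂ)) * (tilde (π/2) ((σ:ℂ) * ψ1 (π/2) μ) (fun s => ψ1 s μ) t)) t := by
    intro t ht
    have hmem : t ∈ Ioo 0 (π/2) ∪ Ioo (π/2) π := Or.inr ⟨ht.1, ht.2.trans hx2⟩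
    have heq : (tilde (π/2) ((σ:ℂ)⁻¹ * ψ2 (π/2) μ) (fun s => ψ2 s μ)) =ᶠ[𝓝 t] fun s => ψ2 s μ := by
      filter_upwards [isOpen_Ioi.mem_nhds ht.1] with s hs using tilde_of_gt hs
    rw [tilde_of_gt ht.1]
    exact (hψ.hasDeriv2 μ t hmem).congr_of_eventuallyEq heq
  -- the three FTC identities
  have hR0 := ftc_aux V m μ (-(x:ℂ))
    (tilde (π/2) ((σ:ℂ) * ψ1 (π/2) μ) (fun s => ψ1 s μ))
    (tilde (π/2) ((σ:ℂ)⁻¹ * ψ2 (π/2) μ) (fun s => ψ2 s μ))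
    (π/2) x hx1.le hg1c hg2c hVcR hgd1 hgd2
  have hB0 := ftc_aux V m μ (-(x:ℂ)) (fun t => ψ1 t μ) (fun t => ψ2 t μ) 0 (π/2) (by linarith)
    (hψ.contLeft1 μ) (hψ.contLeft2 μ) hVcL
    (fun t ht => hψ.hasDeriv1 μ t (Or.inl ht)) (fun t ht => hψ.hasDeriv2 μ t (Or.inl ht))
  have hC0 := ftc_aux V m μ ((x:ℂ) - (π:ℂ)) (fun t => ψ1 t μ) (fun t => ψ2 t μ) 0 (π/2) (by linarith)
    (hψ.contLeft1 μ) (hψ.contLeft2 μ) hVcL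
    (fun t ht => hψ.hasDeriv1 μ t (Or.inl ht)) (fun t ht => hψ.hasDeriv2 μ t (Or.inl ht))
  -- rewrite phase arguments
  have harg1 : ∀ t : ℝ, μ * ((t:ℂ) + -(x:ℂ)) = μ * ((t:ℂ) - (x:ℂ)) := fun t => by ring
  have harg2 : ∀ t : ℝ, μ * ((t:ℂ) + ((x:ℂ) - (π:ℂ))) = μ * ((x:ℂ) + (t:ℂ) - (π:ℂ)) :=
    fun t => by ring
  simp only [harg1, hψ.init1, hψ.init2, neg_mul, Complex.ofReal_cos, Complex.ofReal_sin,
    Complex.ofReal_neg] at hR0 hB0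
  simp only [harg2, hψ.init1, hψ.init2, neg_mul, Complex.ofReal_cos, Complex.ofReal_sin,
    Complex.ofReal_neg] at hC0
  -- integrability
  have iiS1 : IntervalIntegrable
      (fun t => Complex.sin (μ * ((t:ℂ) - (x:ℂ))) * ψ1 t μ * ((V t + m : ℝ):ℂ))
      volume 0 (π/2) := ii_aux (by linarith) (by fun_prop) (hψ.contLeft1 μ) hpL
  have iiC1 : IntervalIntegrable
      (fun t => Complex.cos (μ * ((t:ℂ) - (x:ℂ))) * ψ2 t μ * ((V t - m : ℝ):ℂ))
      volume 0 (π/2) := ii_aux (by linarith) (by fun_prop) (hψ.contLeft2 μ) hqL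
  have iiS2 : IntervalIntegrable
      (fun t => Complex.sin (μ * ((x:ℂ) + (t:ℂ) - (π:ℂ))) * ψ1 t μ * ((V t + m : ℝ):ℂ))
      volume 0 (π/2) := ii_aux (by linarith) (by fun_prop) (hψ.contLeft1 μ) hpL
  have iiC2 : IntervalIntegrable
      (fun t => Complex.cos (μ * ((x:ℂ) + (t:ℂ) - (π:ℂ))) * ψ2 t μ * ((V t - m : ℝ):ℂ))
      volume 0 (π/2) := ii_aux (by linarith) (by fun_prop) (hψ.contLeft2 μ) hqL
  have iiS3t : IntervalIntegrable
      (fun t => Complex.sin (μ * ((t:ℂ) - (x:ℂ)))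
        * (tilde (π/2) ((σ:ℂ) * ψ1 (π/2) μ) (fun s => ψ1 s μ) t) * ((V t + m : ℝ):ℂ))
      volume (π/2) x := ii_aux hx1.le (by fun_prop) hg1c hpR
  have iiC3t : IntervalIntegrable
      (fun t => Complex.cos (μ * ((t:ℂ) - (x:ℂ)))
        * (tilde (π/2) ((σ:ℂ)⁻¹ * ψ2 (π/2) μ) (fun s => ψ2 s μ) t) * ((V t - m : ℝ):ℂ))
      volume (π/2) x := ii_aux hx1.le (by fun_prop) hg2c hqR
  -- split the FTC integrals
  have iiS1n : IntervalIntegrable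
      (fun t => -(Complex.sin (μ * ((t:ℂ) - (x:ℂ))) * ψ1 t μ * ((V t + m : ℝ):ℂ)))
      volume 0 (π/2) := by exact iiS1.neg
  have iiS2n : IntervalIntegrable
      (fun t => -(Complex.sin (μ * ((x:ℂ) + (t:ℂ) - (π:ℂ))) * ψ1 t μ * ((V t + m : ℝ):ℂ)))
      volume 0 (π/2) := by exact iiS2.neg
  have iiS3tn : IntervalIntegrable
      (fun t => -(Complex.sin (μ * ((t:ℂ) - (x:ℂ)))
        * (tilde (π/2) ((σ:ℂ) * ψ1 (π/2) μ) (fun s => ψ1 s μ) t) * ((V t + m : ℝ):ℂ)))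
      volume (π/2) x := by exact iiS3t.neg
  rw [intervalIntegral.integral_add iiS1n iiC1, intervalIntegral.integral_neg] at hB0
  rw [intervalIntegral.integral_add iiS2n iiC2, intervalIntegral.integral_neg] at hC0
  rw [intervalIntegral.integral_add iiS3tn iiC3t, intervalIntegral.integral_neg] at hR0
  -- replace tilde integrals by ψ integrals
  have hSR : (∫ t in (π/2)..x, Complex.sin (μ * ((t:ℂ) - (x:ℂ)))
        * (tilde (π/2) ((σ:ℂ) * ψ1 (π/2) μ) (fun s => ψ1 s μ) t) * ((V t + m : ℝ):ℂ))
      = ∫ t in (π/2)..x, Complex.sin (μ * ((t:ℂ) - (x:ℂ))) * ψ1 t μ * ((V t + m : ℝ):ℂ) := by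
    apply intervalIntegral.integral_congr_ae
    apply Filter.Eventually.of_forall
    intro t ht
    rw [Set.uIoc_of_le hx1.le] at ht
    rw [tilde_of_gt ht.1]
  have hCR : (∫ t in (π/2)..x, Complex.cos (μ * ((t:ℂ) - (x:ℂ)))
        * (tilde (π/2) ((σ:ℂ)⁻¹ * ψ2 (π/2) μ) (fun s => ψ2 s μ) t) * ((V t - m : ℝ):ℂ))
      = ∫ t in (π/2)..x, Complex.cos (μ * ((t:ℂ) - (x:ℂ))) * ψ2 t μ * ((V t - m : ℝ):ℂ) := by
    apply intervalIntegral.integral_congr_ae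
    apply Filter.Eventually.of_forall
    intro t ht
    rw [Set.uIoc_of_le hx1.le] at ht
    rw [tilde_of_gt ht.1]
  rw [hSR, hCR] at hR0
  simp only [tilde_of_gt hx1, tilde_self] at hR0
  rw [show μ * ((x:ℂ) - (x:ℂ)) = 0 by ring] at hR0
  simp only [Complex.cos_zero, Complex.sin_zero, one_mul, zero_mul, add_zero] at hR0
  -- endpoint trig identities
  have hend1 : Complex.cos (μ * (((0:ℝ):ℂ) - (x:ℂ))) * Complex.cos (θ:ℂ)
      + Complex.sin (μ * (((0:ℝ):ℂ) - (x:ℂ))) * -Complex.sin (θ:ℂ)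
      = Complex.cos (μ * (x:ℂ) - (θ:ℂ)) := by
    rw [show μ * (((0:ℝ):ℂ) - (x:ℂ)) = -(μ * (x:ℂ)) by push_cast; ring,
      Complex.cos_neg, Complex.sin_neg, Complex.cos_sub]
    ring
  have hend2 : Complex.cos (μ * ((x:ℂ) + ((0:ℝ):ℂ) - (π:ℂ))) * Complex.cos (θ:ℂ)
      + Complex.sin (μ * ((x:ℂ) + ((0:ℝ):ℂ) - (π:ℂ))) * -Complex.sin (θ:ℂ)
      = Complex.cos (μ * ((π - x : ℝ):ℂ) - (θ:ℂ)) := by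
    rw [show μ * ((x:ℂ) + ((0:ℝ):ℂ) - (π:ℂ)) = -(μ * ((π - x : ℝ):ℂ)) by push_cast; ring,
      Complex.cos_neg, Complex.sin_neg, Complex.cos_sub]
    ring
  have hmc : Complex.cos (μ * ((x:ℂ) + (((π/2:ℝ)):ℂ) - (π:ℂ)))
      = Complex.cos (μ * ((((π/2:ℝ)):ℂ) - (x:ℂ))) := by
    rw [show μ * ((x:ℂ) + (((π/2:ℝ)):ℂ) - (π:ℂ)) = -(μ * ((((π/2:ℝ)):ℂ) - (x:ℂ))) by
      push_cast; ring, Complex.cos_neg]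
  have hms : Complex.sin (μ * ((x:ℂ) + (((π/2:ℝ)):ℂ) - (π:ℂ)))
      = -Complex.sin (μ * ((((π/2:ℝ)):ℂ) - (x:ℂ))) := by
    rw [show μ * ((x:ℂ) + (((π/2:ℝ)):ℂ) - (π:ℂ)) = -(μ * ((((π/2:ℝ)):ℂ) - (x:ℂ))) by
      push_cast; ring, Complex.sin_neg]
  rw [hmc, hms] at hC0
  -- split the goal integrals
  have split1 : (∫ t in (0:ℝ)..(π/2),
        ((sigmaP σ : ℂ) * Complex.sin (μ * ((t : ℂ) - (x : ℂ)))
          + (sigmaM σ : ℂ) * Complex.sin (μ * ((x : ℂ) + (t : ℂ) - (π : ℂ))))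
        * ψ1 t μ * ((V t + m : ℝ) : ℂ))
      = (sigmaP σ : ℂ) * (∫ t in (0:ℝ)..(π/2),
          Complex.sin (μ * ((t:ℂ) - (x:ℂ))) * ψ1 t μ * ((V t + m : ℝ):ℂ))
        + (sigmaM σ : ℂ) * (∫ t in (0:ℝ)..(π/2),
          Complex.sin (μ * ((x:ℂ) + (t:ℂ) - (π:ℂ))) * ψ1 t μ * ((V t + m : ℝ):ℂ)) := by
    rw [← intervalIntegral.integral_const_mul, ← intervalIntegral.integral_const_mul,
      ← intervalIntegral.integral_add (iiS1.const_mul _) (iiS2.const_mul _)]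
    apply intervalIntegral.integral_congr
    intro t _
    ring
  have split2 : (∫ t in (0:ℝ)..(π/2),
        ((sigmaP σ : ℂ) * Complex.cos (μ * ((t : ℂ) - (x : ℂ)))
          + (sigmaM σ : ℂ) * Complex.cos (μ * ((x : ℂ) + (t : ℂ) - (π : ℂ))))
        * ψ2 t μ * ((V t - m : ℝ) : ℂ))
      = (sigmaP σ : ℂ) * (∫ t in (0:ℝ)..(π/2),
          Complex.cos (μ * ((t:ℂ) - (x:ℂ))) * ψ2 t μ * ((V t - m : ℝ):ℂ))
        + (sigmaM σ : ℂ) * (∫ t in (0:ℝ)..(π/2),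
          Complex.cos (μ * ((x:ℂ) + (t:ℂ) - (π:ℂ))) * ψ2 t μ * ((V t - m : ℝ):ℂ)) := by
    rw [← intervalIntegral.integral_const_mul, ← intervalIntegral.integral_const_mul,
      ← intervalIntegral.integral_add (iiC1.const_mul _) (iiC2.const_mul _)]
    apply intervalIntegral.integral_congr
    intro t _
    ring
  rw [split1, split2]
  have hsig1 : ((sigmaP σ : ℝ):ℂ) + ((sigmaM σ : ℝ):ℂ) = (σ:ℂ) := by
    unfold sigmaP sigmaM; push_cast; ring
  have hsig2 : ((sigmaP σ : ℝ):ℂ) - ((sigmaM σ : ℝ):ℂ) = (σ:ℂ)⁻¹ := by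
    unfold sigmaP sigmaM; push_cast; ring
  linear_combination (-(((sigmaP σ : ℝ)):ℂ)) * hB0 - (((sigmaM σ : ℝ)):ℂ) * hC0 - hR0
    + ((sigmaP σ : ℝ):ℂ) * hend1 + ((sigmaM σ : ℝ):ℂ) * hend2
    - Complex.cos (μ * ((((π/2:ℝ)):ℂ) - (x:ℂ))) * ψ1 (π/2) μ * hsig1
    - Complex.sin (μ * ((((π/2:ℝ)):ℂ) - (x:ℂ))) * ψ2 (π/2) μ * hsig2
end
end

section
/- For x > π/2, the second component of the solution satisfies the integral equation ψ_2(x,μ) = σ^+ sin(μx − θ) − σ^− sin(μ(π−x) − θ) − ∫_0^{π/2} (σ^+ cos(μ(t−x)) − σ^− cos(μ(x+t−π))) ψ_1(t,μ) p(t) dt − ∫_0^{π/2} (σ^+ sin(μ(t−x)) − σ^− sin(μ(x+t−π))) ψ_2(t,μ) q(t) dt − ∫_{π/2}^x cos(μ(t−x)) ψ_1(t,μ) p(t) dt − ∫_{π/2}^x sin(μ(t−x)) ψ_2(t,μ) q(t) dt. -/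
open Real MeasureTheory Set Filter Topology

noncomputable section

/-! ### Auxiliary lemmas -/


lemma hasDerivAt_sin_lin (μ a : ℂ) (t : ℝ) :
    HasDerivAt (fun s : ℝ => Complex.sin (μ * (↑s - a))) (μ * Complex.cos (μ * (↑t - a))) t := by
  have h : HasDerivAt (fun z : ℂ => Complex.sin (μ * (z - a))) (Complex.cos (μ * (↑t - a)) * μ) ↑t := by
    have := (Complex.hasDerivAt_sin (μ * (↑t - a))).comp (↑t : ℂ)
      (((hasDerivAt_id (↑t : ℂ)).sub_const a).const_mul μ)
    simp only [mul_one] at this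
    exact this
  simpa [mul_comm] using h.comp_ofReal

lemma hasDerivAt_cos_lin (μ a : ℂ) (t : ℝ) :
    HasDerivAt (fun s : ℝ => Complex.cos (μ * (↑s - a))) (-(μ * Complex.sin (μ * (↑t - a)))) t := by
  have h : HasDerivAt (fun z : ℂ => Complex.cos (μ * (z - a))) (-Complex.sin (μ * (↑t - a)) * μ) ↑t := by
    have := (Complex.hasDerivAt_cos (μ * (↑t - a))).comp (↑t : ℂ)
      (((hasDerivAt_id (↑t : ℂ)).sub_const a).const_mul μ)
    simp only [mul_one] at this
    exact this
  have := h.comp_ofReal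
  convert this using 1
  ring

lemma hasDerivAt_H (V : ℝ → ℝ) (m : ℝ) (ψ1 ψ2 : ℝ → ℂ) (μ a : ℂ) (t : ℝ)
    (h1 : HasDerivAt ψ1 ((((V t - m : ℝ) : ℂ) - μ) * ψ2 t) t)
    (h2 : HasDerivAt ψ2 ((μ - ((V t + m : ℝ) : ℂ)) * ψ1 t) t) :
    HasDerivAt (fun s : ℝ => Complex.sin (μ * (↑s - a)) * ψ1 s - Complex.cos (μ * (↑s - a)) * ψ2 s)
      (Complex.cos (μ * (↑t - a)) * ψ1 t * ((V t + m : ℝ) : ℂ)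
        + Complex.sin (μ * (↑t - a)) * ψ2 t * ((V t - m : ℝ) : ℂ)) t := by
  have h := ((hasDerivAt_sin_lin μ a t).mul h1).sub ((hasDerivAt_cos_lin μ a t).mul h2)
  exact h.congr_deriv (by push_cast; ring)

lemma cont_cos_lin (μ a : ℂ) : Continuous (fun t : ℝ => Complex.cos (μ * (↑t - a))) :=
  Complex.continuous_cos.comp (continuous_const.mul (Complex.continuous_ofReal.sub continuous_const))

lemma cont_sin_lin (μ a : ℂ) : Continuous (fun t : ℝ => Complex.sin (μ * (↑t - a))) :=
  Complex.continuous_sin.comp (continuous_const.mul (Complex.continuous_ofReal.sub continuous_const))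

/-- for `x > π/2`, the second component satisfies the integral equation
`ψ2(x,μ) = σ⁺ sin(μx-θ) - σ⁻ sin(μ(π-x)-θ)
  - ∫₀^{π/2} (σ⁺ cos(μ(t-x)) - σ⁻ cos(μ(x+t-π))) ψ1(t,μ) p(t) dt
  - ∫₀^{π/2} (σ⁺ sin(μ(t-x)) - σ⁻ sin(μ(x+t-π))) ψ2(t,μ) q(t) dt
  - ∫_{π/2}^x cos(μ(t-x)) ψ1(t,μ) p(t) dt - ∫_{π/2}^x sin(μ(t-x)) ψ2(t,μ) q(t) dt`. -/
theorem dirac_integral_equation_psi2_right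
    (V : ℝ → ℝ) (m θ β σ : ℝ)
    (hθ : θ ∈ Set.Ico 0 π) (hβ : β ∈ Set.Ico 0 π) (hσ : 0 < σ)
    (hV : SobolevW12 V) (hV0 : (∫ t in (0:ℝ)..π, V t) = 0)
    (ψ1 ψ2 : ℝ → ℂ → ℂ) (hψ : IsDiracSolution V m θ σ ψ1 ψ2)
    (μ : ℂ) (x : ℝ) (hx : x ∈ Set.Ioo (π/2) π) :
    ψ2 x μ = (sigmaP σ : ℂ) * Complex.sin (μ * (x : ℂ) - (θ : ℂ))
      - (sigmaM σ : ℂ) * Complex.sin (μ * ((π : ℝ) - x : ℝ) - (θ : ℂ))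
      - (∫ t in (0:ℝ)..(π/2),
          ((sigmaP σ : ℂ) * Complex.cos (μ * ((t : ℂ) - (x : ℂ)))
            - (sigmaM σ : ℂ) * Complex.cos (μ * ((x : ℂ) + (t : ℂ) - (π : ℂ))))
          * ψ1 t μ * ((V t + m : ℝ) : ℂ))
      - (∫ t in (0:ℝ)..(π/2),
          ((sigmaP σ : ℂ) * Complex.sin (μ * ((t : ℂ) - (x : ℂ)))
            - (sigmaM σ : ℂ) * Complex.sin (μ * ((x : ℂ) + (t : ℂ) - (π : ℂ))))
          * ψ2 t μ * ((V t - m : ℝ) : ℂ))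
      - (∫ t in (π/2)..x, Complex.cos (μ * ((t : ℂ) - (x : ℂ))) * ψ1 t μ * ((V t + m : ℝ) : ℂ))
      - (∫ t in (π/2)..x, Complex.sin (μ * ((t : ℂ) - (x : ℂ))) * ψ2 t μ * ((V t - m : ℝ) : ℂ)) := by
  obtain ⟨hx1, hx2⟩ := hx
  have hπ2 : (0:ℝ) < π/2 := by positivity
  -- continuity of V
  obtain ⟨hVL2, V', hV'L2, hVrepr⟩ := hV
  haveI : IsFiniteMeasure (volume.restrict (Set.Ioo 0 π)) := by
    constructor; simp [Real.volume_Ioo]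
  have hVcont : ContinuousOn V (Set.Icc 0 π) := by
    have hint : IntegrableOn V' (Set.Ioo 0 π) := hV'L2.integrable (by norm_num)
    have hicc : IntegrableOn V' (Set.Icc 0 π) := by
      rwa [integrableOn_Icc_iff_integrableOn_Ioo]
    have hc : ContinuousOn (fun y => V 0 + ∫ t in (0:ℝ)..y, V' t) (Set.Icc 0 π) := by
      apply continuousOn_const.add
      have h2 := intervalIntegral.continuousOn_primitive_interval
        (a := (0:ℝ)) (b := π) (μ := volume) (f := V') (by rwa [uIcc_of_le pi_pos.le])
      rwa [uIcc_of_le pi_pos.le] at h2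
    exact hc.congr hVrepr
  have hpcont : ContinuousOn (fun t => ((V t + m : ℝ) : ℂ)) (Set.Icc 0 π) :=
    Complex.continuous_ofReal.comp_continuousOn (hVcont.add continuousOn_const)
  have hqcont : ContinuousOn (fun t => ((V t - m : ℝ) : ℂ)) (Set.Icc 0 π) :=
    Complex.continuous_ofReal.comp_continuousOn (hVcont.sub continuousOn_const)
  have hsubL : Set.Icc (0:ℝ) (π/2) ⊆ Set.Icc 0 π :=
    Set.Icc_subset_Icc le_rfl (by linarith [pi_pos])
  have hsubR : Set.Icc (π/2) x ⊆ Set.Icc 0 π :=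
    Set.Icc_subset_Icc hπ2.le hx2.le
  -- left-interval integrability of the pieces
  have hint1L : ∀ a : ℝ, IntervalIntegrable
      (fun t => Complex.cos (μ * (↑t - ↑a)) * ψ1 t μ * ((V t + m : ℝ) : ℂ)) volume 0 (π/2) := by
    intro a
    apply ContinuousOn.intervalIntegrable
    rw [uIcc_of_le hπ2.le]
    exact (((cont_cos_lin μ a).continuousOn).mul (hψ.contLeft1 μ)).mul (hpcont.mono hsubL)
  have hint2L : ∀ a : ℝ, IntervalIntegrable
      (fun t => Complex.sin (μ * (↑t - ↑a)) * ψ2 t μ * ((V t - m : ℝ) : ℂ)) volume 0 (π/2) := by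
    intro a
    apply ContinuousOn.intervalIntegrable
    rw [uIcc_of_le hπ2.le]
    exact (((cont_sin_lin μ a).continuousOn).mul (hψ.contLeft2 μ)).mul (hqcont.mono hsubL)
  -- FTC on the left interval
  have ftc_left : ∀ a : ℝ,
      (∫ t in (0:ℝ)..(π/2), Complex.cos (μ * (↑t - ↑a)) * ψ1 t μ * ((V t + m : ℝ) : ℂ))
      + (∫ t in (0:ℝ)..(π/2), Complex.sin (μ * (↑t - ↑a)) * ψ2 t μ * ((V t - m : ℝ) : ℂ))
      = (Complex.sin (μ * (↑(π/2) - ↑a)) * ψ1 (π/2) μ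
          - Complex.cos (μ * (↑(π/2) - ↑a)) * ψ2 (π/2) μ)
        + Complex.sin (μ * ↑a - ↑θ) := by
    intro a
    have hcontH : ContinuousOn
        (fun s : ℝ => Complex.sin (μ * (↑s - ↑a)) * ψ1 s μ - Complex.cos (μ * (↑s - ↑a)) * ψ2 s μ)
        (Set.Icc 0 (π/2)) :=
      (((cont_sin_lin μ a).continuousOn).mul (hψ.contLeft1 μ)).sub
        (((cont_cos_lin μ a).continuousOn).mul (hψ.contLeft2 μ))
    have hderiv : ∀ t ∈ Set.Ioo (0:ℝ) (π/2),
        HasDerivAt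
          (fun s : ℝ => Complex.sin (μ * (↑s - ↑a)) * ψ1 s μ - Complex.cos (μ * (↑s - ↑a)) * ψ2 s μ)
          (Complex.cos (μ * (↑t - ↑a)) * ψ1 t μ * ((V t + m : ℝ) : ℂ)
            + Complex.sin (μ * (↑t - ↑a)) * ψ2 t μ * ((V t - m : ℝ) : ℂ)) t := fun t ht =>
      hasDerivAt_H V m (fun s => ψ1 s μ) (fun s => ψ2 s μ) μ ↑a t
        (hψ.hasDeriv1 μ t (Or.inl ht)) (hψ.hasDeriv2 μ t (Or.inl ht))
    have hftc := intervalIntegral.integral_eq_sub_of_hasDerivAt_of_le hπ2.le hcontH hderiv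
      ((hint1L a).add (hint2L a))
    rw [intervalIntegral.integral_add (hint1L a) (hint2L a)] at hftc
    rw [hftc, hψ.init1 μ, hψ.init2 μ]
    have e1 : μ * (((0:ℝ):ℂ) - (a:ℂ)) = -(μ * ↑a) := by push_cast; ring
    rw [e1, Complex.sin_neg, Complex.cos_neg, Complex.ofReal_cos, Complex.ofReal_sin,
      Complex.sin_sub]
    ring
  -- Right interval: extended functions and FTC
  have hxne : x ≠ π/2 := ne_of_gt hx1
  set Ψ1 : ℝ → ℂ := fun t => if t = π/2 then (σ:ℂ) * ψ1 (π/2) μ else ψ1 t μ with hΨ1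
  set Ψ2 : ℝ → ℂ := fun t => if t = π/2 then (σ:ℂ)⁻¹ * ψ2 (π/2) μ else ψ2 t μ with hΨ2
  have hcontΨ : ∀ (Ψ : ℝ → ℂ) (ψ : ℝ → ℂ) (L : ℂ),
      (Ψ = fun t => if t = π/2 then L else ψ t) →
      ContinuousOn ψ (Set.Ioc (π/2) π) →
      Tendsto ψ (𝓝[>] (π/2)) (𝓝 L) →
      ContinuousOn Ψ (Set.Icc (π/2) x) := by
    intro Ψ ψ L hdef hcont hjump
    intro t ht
    rcases eq_or_lt_of_le ht.1 with heq | hlt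
    · have h0 : ContinuousWithinAt Ψ (Set.Ici (π/2)) (π/2) := by
        rw [← continuousWithinAt_Ioi_iff_Ici]
        have hΨt : Ψ (π/2) = L := by rw [hdef]; simp
        rw [ContinuousWithinAt, hΨt]
        refine Tendsto.congr' ?_ hjump
        filter_upwards [self_mem_nhdsWithin] with s hs
        rw [hdef]; simp [ne_of_gt (Set.mem_Ioi.mp hs)]
      rw [← heq]
      exact h0.mono Set.Icc_subset_Ici_self
    · have hmem : Set.Icc (π/2) x ∩ Set.Ioi (π/2) ∈ 𝓝[Set.Icc (π/2) x] t :=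
        inter_mem_nhdsWithin _ (Ioi_mem_nhds hlt)
      have h1 : ContinuousWithinAt ψ (Set.Ioc (π/2) π) t :=
        hcont t ⟨hlt, le_trans ht.2 hx2.le⟩
      have h2 : ContinuousWithinAt ψ (Set.Icc (π/2) x) t := by
        refine h1.mono_of_mem_nhdsWithin (Filter.mem_of_superset hmem ?_)
        rintro s ⟨hs1, hs2⟩
        exact ⟨hs2, le_trans hs1.2 hx2.le⟩
      refine h2.congr_of_eventuallyEq ?_ (by rw [hdef]; simp [ne_of_gt hlt])
      filter_upwards [hmem] with s hs
      rw [hdef]; simp [ne_of_gt (Set.mem_Ioi.mp hs.2)]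
  have hcΨ1 : ContinuousOn Ψ1 (Set.Icc (π/2) x) :=
    hcontΨ Ψ1 (fun t => ψ1 t μ) _ hΨ1 (hψ.contRight1 μ) (hψ.jump1 μ)
  have hcΨ2 : ContinuousOn Ψ2 (Set.Icc (π/2) x) :=
    hcontΨ Ψ2 (fun t => ψ2 t μ) _ hΨ2 (hψ.contRight2 μ) (hψ.jump2 μ)
  -- integrability of the right-interval pieces (tilde versions)
  have hint1R : IntervalIntegrable
      (fun t => Complex.cos (μ * (↑t - ↑x)) * Ψ1 t * ((V t + m : ℝ) : ℂ)) volume (π/2) x := by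
    apply ContinuousOn.intervalIntegrable
    rw [uIcc_of_le hx1.le]
    exact (((cont_cos_lin μ x).continuousOn).mul hcΨ1).mul (hpcont.mono hsubR)
  have hint2R : IntervalIntegrable
      (fun t => Complex.sin (μ * (↑t - ↑x)) * Ψ2 t * ((V t - m : ℝ) : ℂ)) volume (π/2) x := by
    apply ContinuousOn.intervalIntegrable
    rw [uIcc_of_le hx1.le]
    exact (((cont_sin_lin μ x).continuousOn).mul hcΨ2).mul (hqcont.mono hsubR)
  -- FTC on the right interval
  have hderivR : ∀ t ∈ Set.Ioo (π/2) x,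
      HasDerivAt (fun s : ℝ => Complex.sin (μ * (↑s - ↑x)) * Ψ1 s - Complex.cos (μ * (↑s - ↑x)) * Ψ2 s)
        (Complex.cos (μ * (↑t - ↑x)) * Ψ1 t * ((V t + m : ℝ) : ℂ)
          + Complex.sin (μ * (↑t - ↑x)) * Ψ2 t * ((V t - m : ℝ) : ℂ)) t := by
    intro t ht
    have htne : t ≠ π/2 := ne_of_gt ht.1
    have hmem : t ∈ Set.Ioo 0 (π/2) ∪ Set.Ioo (π/2) π := Or.inr ⟨ht.1, lt_trans ht.2 hx2⟩
    have hH := hasDerivAt_H V m (fun s => ψ1 s μ) (fun s => ψ2 s μ) μ ↑x t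
      (hψ.hasDeriv1 μ t hmem) (hψ.hasDeriv2 μ t hmem)
    have hev : ∀ᶠ s in 𝓝 t, s ≠ π/2 := eventually_ne_nhds htne
    have hEq : (fun s : ℝ => Complex.sin (μ * (↑s - ↑x)) * Ψ1 s - Complex.cos (μ * (↑s - ↑x)) * Ψ2 s)
        =ᶠ[𝓝 t] (fun s : ℝ => Complex.sin (μ * (↑s - ↑x)) * ψ1 s μ - Complex.cos (μ * (↑s - ↑x)) * ψ2 s μ) := by
      filter_upwards [hev] with s hs
      simp [hΨ1, hΨ2, hs]
    have hH' : HasDerivAt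
        (fun s : ℝ => Complex.sin (μ * (↑s - ↑x)) * ψ1 s μ - Complex.cos (μ * (↑s - ↑x)) * ψ2 s μ)
        (Complex.cos (μ * (↑t - ↑x)) * ψ1 t μ * ((V t + m : ℝ) : ℂ)
          + Complex.sin (μ * (↑t - ↑x)) * ψ2 t μ * ((V t - m : ℝ) : ℂ)) t := hH
    have hres := HasDerivAt.congr_of_eventuallyEq hH' hEq
    simpa [hΨ1, hΨ2, htne] using hres
  have hcontHR : ContinuousOn
      (fun s : ℝ => Complex.sin (μ * (↑s - ↑x)) * Ψ1 s - Complex.cos (μ * (↑s - ↑x)) * Ψ2 s)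
      (Set.Icc (π/2) x) :=
    (((cont_sin_lin μ x).continuousOn).mul hcΨ1).sub (((cont_cos_lin μ x).continuousOn).mul hcΨ2)
  have hftcR := intervalIntegral.integral_eq_sub_of_hasDerivAt_of_le hx1.le hcontHR hderivR
    (hint1R.add hint2R)
  rw [intervalIntegral.integral_add hint1R hint2R] at hftcR
  -- evaluate endpoints
  have hHx : Complex.sin (μ * ((x:ℝ) - ↑x)) * Ψ1 x - Complex.cos (μ * ((x:ℝ) - ↑x)) * Ψ2 x
      = -ψ2 x μ := by
    have e : μ * (((x:ℝ):ℂ) - (x:ℂ)) = 0 := by ring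
    rw [e, Complex.sin_zero, Complex.cos_zero]
    simp [hΨ1, hΨ2, hxne]
  have hHπ2 : Complex.sin (μ * (↑(π/2) - ↑x)) * Ψ1 (π/2) - Complex.cos (μ * (↑(π/2) - ↑x)) * Ψ2 (π/2)
      = Complex.sin (μ * (↑(π/2) - ↑x)) * ((σ:ℂ) * ψ1 (π/2) μ)
        - Complex.cos (μ * (↑(π/2) - ↑x)) * ((σ:ℂ)⁻¹ * ψ2 (π/2) μ) := by
    simp [hΨ1, hΨ2]
  rw [hHx, hHπ2] at hftcR
  -- replace the tilde integrals by the real ones (a.e. equal)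
  have haecompl : {t : ℝ | t ≠ π/2} ∈ (ae volume) := by
    rw [mem_ae_iff]
    have hset : {t : ℝ | t ≠ π/2}ᶜ = {π/2} := by ext t; simp
    rw [hset, Real.volume_singleton]
  have hK1 : (∫ t in (π/2)..x, Complex.cos (μ * (↑t - ↑x)) * Ψ1 t * ((V t + m : ℝ) : ℂ))
      = ∫ t in (π/2)..x, Complex.cos (μ * ((t:ℂ) - (x:ℂ))) * ψ1 t μ * ((V t + m : ℝ) : ℂ) := by
    apply intervalIntegral.integral_congr_ae
    filter_upwards [haecompl] with t ht _
    simp [hΨ1, ht]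
  have hK2 : (∫ t in (π/2)..x, Complex.sin (μ * (↑t - ↑x)) * Ψ2 t * ((V t - m : ℝ) : ℂ))
      = ∫ t in (π/2)..x, Complex.sin (μ * ((t:ℂ) - (x:ℂ))) * ψ2 t μ * ((V t - m : ℝ) : ℂ) := by
    apply intervalIntegral.integral_congr_ae
    filter_upwards [haecompl] with t ht _
    simp [hΨ2, ht]
  rw [hK1, hK2] at hftcR
  -- the jump identity
  have hD : Complex.sin (μ * (↑(π/2) - ↑x)) * ((σ:ℂ) * ψ1 (π/2) μ)
        - Complex.cos (μ * (↑(π/2) - ↑x)) * ((σ:ℂ)⁻¹ * ψ2 (π/2) μ)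
      = ((sigmaP σ : ℝ):ℂ) * (Complex.sin (μ * (↑(π/2) - ↑x)) * ψ1 (π/2) μ
            - Complex.cos (μ * (↑(π/2) - ↑x)) * ψ2 (π/2) μ)
        - ((sigmaM σ : ℝ):ℂ) * (Complex.sin (μ * (↑(π/2) - ↑(π - x))) * ψ1 (π/2) μ
            - Complex.cos (μ * (↑(π/2) - ↑(π - x))) * ψ2 (π/2) μ) := by
    have e : μ * ((↑(π/2):ℂ) - ↑(π - x)) = -(μ * ((↑(π/2):ℂ) - ↑x)) := by
      push_cast; ring
    rw [e, Complex.sin_neg, Complex.cos_neg]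
    simp only [sigmaP, sigmaM]
    have hσ0 : (σ:ℂ) ≠ 0 := by exact_mod_cast hσ.ne'
    push_cast
    field_simp
    ring
  -- rewrite the target's combined integrals
  have hI1 : (∫ t in (0:ℝ)..(π/2),
        ((sigmaP σ : ℂ) * Complex.cos (μ * ((t : ℂ) - (x : ℂ)))
          - (sigmaM σ : ℂ) * Complex.cos (μ * ((x : ℂ) + (t : ℂ) - (π : ℂ))))
        * ψ1 t μ * ((V t + m : ℝ) : ℂ))
      = ((sigmaP σ : ℝ):ℂ) * (∫ t in (0:ℝ)..(π/2), Complex.cos (μ * (↑t - ↑x)) * ψ1 t μ * ((V t + m : ℝ) : ℂ))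
        - ((sigmaM σ : ℝ):ℂ) * (∫ t in (0:ℝ)..(π/2), Complex.cos (μ * (↑t - ↑(π - x))) * ψ1 t μ * ((V t + m : ℝ) : ℂ)) := by
    rw [← intervalIntegral.integral_const_mul, ← intervalIntegral.integral_const_mul,
      ← intervalIntegral.integral_sub (((hint1L x)).const_mul _) (((hint1L (π - x))).const_mul _)]
    apply intervalIntegral.integral_congr
    intro t _
    have e : μ * ((x:ℂ) + (t:ℂ) - (π:ℂ)) = μ * ((t:ℂ) - ↑(π - x)) := by push_cast; ring
    beta_reduce
    rw [e]; ring
  have hI2 : (∫ t in (0:ℝ)..(π/2),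
        ((sigmaP σ : ℂ) * Complex.sin (μ * ((t : ℂ) - (x : ℂ)))
          - (sigmaM σ : ℂ) * Complex.sin (μ * ((x : ℂ) + (t : ℂ) - (π : ℂ))))
        * ψ2 t μ * ((V t - m : ℝ) : ℂ))
      = ((sigmaP σ : ℝ):ℂ) * (∫ t in (0:ℝ)..(π/2), Complex.sin (μ * (↑t - ↑x)) * ψ2 t μ * ((V t - m : ℝ) : ℂ))
        - ((sigmaM σ : ℝ):ℂ) * (∫ t in (0:ℝ)..(π/2), Complex.sin (μ * (↑t - ↑(π - x))) * ψ2 t μ * ((V t - m : ℝ) : ℂ)) := by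
    rw [← intervalIntegral.integral_const_mul, ← intervalIntegral.integral_const_mul,
      ← intervalIntegral.integral_sub (((hint2L x)).const_mul _) (((hint2L (π - x))).const_mul _)]
    apply intervalIntegral.integral_congr
    intro t _
    have e : μ * ((x:ℂ) + (t:ℂ) - (π:ℂ)) = μ * ((t:ℂ) - ↑(π - x)) := by push_cast; ring
    beta_reduce
    rw [e]; ring
  -- assemble
  have hL1 := ftc_left x
  have hL2 := ftc_left (π - x)
  rw [hI1, hI2]
  linear_combination ((sigmaP σ : ℝ):ℂ) * hL1 - ((sigmaM σ : ℝ):ℂ) * hL2 + hftcR - hD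
end
end
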